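/- Let p ∈ (1,2), γ_p = 2/(2−p), λ₊ > 0, and define T(M) = 2∫₀¹ dt / sqrt(γ_p²(1 − t²) + (2λ₊/(p M^{2−p}))(1 − t^p)) for M > 0. Then T is continuous and strictly increasing on (0, ∞), lim_{M→0⁺} T(M) = 0, and lim_{M→+∞} T(M) = π/γ_p. In particular T(M) ∈ (0, π/γ_p) for every M > 0. -/

import Mathlib

open Real Filter Topology Set

open MeasureTheory

private lemma aux_bint (γ : ℝ) :
    IntervalIntegrable (fun t : ℝ => γ⁻¹ * (1 - t) ^ (-(1/2) : ℝ)) volume 0 1 := by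
  have h : IntervalIntegrable (fun t : ℝ => (1 - t) ^ (-(1/2) : ℝ)) volume 0 1 := by
    simpa using (intervalIntegral.intervalIntegrable_rpow' (a := 1) (b := 0)
      (r := -(1/2)) (by norm_num)).comp_sub_left 1
  simpa using h.const_mul γ⁻¹

private lemma aux_lower {p γ c t : ℝ} (hp0 : 0 < p) (hc : 0 ≤ c) (ht0 : 0 ≤ t) (ht1 : t ≤ 1) :
    γ ^ 2 * (1 - t) ≤ γ ^ 2 * (1 - t ^ 2) + c * (1 - t ^ p) := by
  have h1 : t ^ 2 ≤ t := by nlinarith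
  have h2 : t ^ p ≤ 1 := Real.rpow_le_one ht0 ht1 hp0.le
  nlinarith [sq_nonneg γ]

private lemma aux_bound {γ p c : ℝ} (hγ : 0 < γ) (hp0 : 0 < p) (hc : 0 ≤ c) :
    ∀ t ∈ Set.uIoc (0:ℝ) 1,
      ‖1 / Real.sqrt (γ ^ 2 * (1 - t ^ 2) + c * (1 - t ^ p))‖
        ≤ γ⁻¹ * (1 - t) ^ (-(1/2) : ℝ) := by
  intro t ht
  rw [Set.uIoc_of_le (by norm_num : (0:ℝ) ≤ 1)] at ht
  rcases eq_or_lt_of_le ht.2 with h1 | h1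
  · subst h1
    simp [Real.one_rpow]
  · have h0 : 0 < 1 - t := by linarith
    have hA : γ ^ 2 * (1 - t) ≤ γ ^ 2 * (1 - t ^ 2) + c * (1 - t ^ p) :=
      aux_lower hp0 hc ht.1.le ht.2
    have hApos : 0 < γ ^ 2 * (1 - t) := by positivity
    have hs : Real.sqrt (γ ^ 2 * (1 - t)) ≤
        Real.sqrt (γ ^ 2 * (1 - t ^ 2) + c * (1 - t ^ p)) := Real.sqrt_le_sqrt hA
    have hsp : 0 < Real.sqrt (γ ^ 2 * (1 - t)) := Real.sqrt_pos.2 hApos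
    have hle : 1 / Real.sqrt (γ ^ 2 * (1 - t ^ 2) + c * (1 - t ^ p))
        ≤ 1 / Real.sqrt (γ ^ 2 * (1 - t)) := one_div_le_one_div_of_le hsp hs
    have heq : 1 / Real.sqrt (γ ^ 2 * (1 - t)) = γ⁻¹ * (1 - t) ^ (-(1/2) : ℝ) := by
      rw [Real.sqrt_mul (sq_nonneg γ), Real.sqrt_sq hγ.le, Real.rpow_neg h0.le,
        ← Real.sqrt_eq_rpow, one_div, mul_inv]
    rw [Real.norm_eq_abs, abs_of_nonneg (by positivity)]
    rw [heq] at hle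
    exact hle

private lemma aux_meas (γ p c : ℝ) :
    AEStronglyMeasurable (fun t : ℝ => 1 / Real.sqrt (γ ^ 2 * (1 - t ^ 2) + c * (1 - t ^ p)))
      (volume.restrict (Set.uIoc (0:ℝ) 1)) :=
  Measurable.aestronglyMeasurable (by fun_prop)

private lemma aux_int {γ p c : ℝ} (hγ : 0 < γ) (hp0 : 0 < p) (hc : 0 ≤ c) :
    IntervalIntegrable
      (fun t : ℝ => 1 / Real.sqrt (γ ^ 2 * (1 - t ^ 2) + c * (1 - t ^ p))) volume 0 1 := by
  refine (aux_bint γ).mono_fun (aux_meas γ p c) ?_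
  rw [Filter.EventuallyLE, ae_restrict_iff' measurableSet_uIoc]
  filter_upwards with t ht
  calc ‖1 / Real.sqrt (γ ^ 2 * (1 - t ^ 2) + c * (1 - t ^ p))‖
      ≤ γ⁻¹ * (1 - t) ^ (-(1/2) : ℝ) := aux_bound hγ hp0 hc t ht
    _ ≤ ‖γ⁻¹ * (1 - t) ^ (-(1/2) : ℝ)‖ := le_abs_self _

private lemma aux_Apos {γ p c t : ℝ} (hγ : 0 < γ) (hp0 : 0 < p) (hc : 0 ≤ c)
    (ht : t ∈ Set.Ioo (0:ℝ) 1) : 0 < γ ^ 2 * (1 - t ^ 2) + c * (1 - t ^ p) := by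
  have h0 : 0 < 1 - t := by linarith [ht.2]
  have := aux_lower (γ := γ) hp0 hc ht.1.le ht.2.le
  nlinarith [sq_nonneg γ, pow_pos hγ 2]

private lemma aux_ipos {γ p c : ℝ} (hγ : 0 < γ) (hp0 : 0 < p) (hc : 0 ≤ c) :
    0 < ∫ t in (0:ℝ)..1, 1 / Real.sqrt (γ ^ 2 * (1 - t ^ 2) + c * (1 - t ^ p)) := by
  refine intervalIntegral.intervalIntegral_pos_of_pos_on (aux_int hγ hp0 hc) ?_ one_pos
  intro t ht
  have := aux_Apos hγ hp0 hc ht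
  positivity

private lemma aux_strict {γ p : ℝ} (hγ : 0 < γ) (hp0 : 0 < p) {c₁ c₂ : ℝ}
    (hc1 : 0 ≤ c₁) (hcc : c₁ < c₂) :
    (∫ t in (0:ℝ)..1, 1 / Real.sqrt (γ ^ 2 * (1 - t ^ 2) + c₂ * (1 - t ^ p))) <
      ∫ t in (0:ℝ)..1, 1 / Real.sqrt (γ ^ 2 * (1 - t ^ 2) + c₁ * (1 - t ^ p)) := by
  have I₁ := aux_int (γ := γ) (p := p) hγ hp0 hc1
  have I₂ := aux_int (γ := γ) (p := p) hγ hp0 (hc1.trans hcc.le)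
  have hpos : 0 < ∫ t in (0:ℝ)..1,
      (1 / Real.sqrt (γ ^ 2 * (1 - t ^ 2) + c₁ * (1 - t ^ p))
        - 1 / Real.sqrt (γ ^ 2 * (1 - t ^ 2) + c₂ * (1 - t ^ p))) := by
    refine intervalIntegral.intervalIntegral_pos_of_pos_on (I₁.sub I₂) ?_ one_pos
    intro t ht
    have hA₁ : 0 < γ ^ 2 * (1 - t ^ 2) + c₁ * (1 - t ^ p) := aux_Apos hγ hp0 hc1 ht
    have htp : t ^ p < 1 := Real.rpow_lt_one ht.1.le ht.2 hp0
    have hlt : γ ^ 2 * (1 - t ^ 2) + c₁ * (1 - t ^ p)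
        < γ ^ 2 * (1 - t ^ 2) + c₂ * (1 - t ^ p) := by nlinarith
    have hs : Real.sqrt (γ ^ 2 * (1 - t ^ 2) + c₁ * (1 - t ^ p))
        < Real.sqrt (γ ^ 2 * (1 - t ^ 2) + c₂ * (1 - t ^ p)) :=
      Real.sqrt_lt_sqrt hA₁.le hlt
    have hsp : 0 < Real.sqrt (γ ^ 2 * (1 - t ^ 2) + c₁ * (1 - t ^ p)) := Real.sqrt_pos.2 hA₁
    have := one_div_lt_one_div_of_lt hsp hs
    linarith
  rw [intervalIntegral.integral_sub I₁ I₂] at hpos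
  linarith

private lemma aux_arcsin : ∫ t in (0:ℝ)..1, 1 / Real.sqrt (1 - t ^ 2) = π / 2 := by
  have hint : IntervalIntegrable (fun t : ℝ => 1 / Real.sqrt (1 - t ^ 2)) volume 0 1 := by
    have hb : IntervalIntegrable (fun t : ℝ => (1 - t) ^ (-(1/2) : ℝ)) volume 0 1 := by
      simpa using (intervalIntegral.intervalIntegrable_rpow' (a := 1) (b := 0)
        (r := -(1/2)) (by norm_num)).comp_sub_left 1
    refine hb.mono_fun (Measurable.aestronglyMeasurable (by fun_prop)) ?_
    rw [Filter.EventuallyLE, ae_restrict_iff' measurableSet_uIoc]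
    filter_upwards with t ht
    rw [Set.uIoc_of_le (by norm_num : (0:ℝ) ≤ 1)] at ht
    rcases eq_or_lt_of_le ht.2 with h1 | h1
    · subst h1; norm_num
    · have h0 : 0 < 1 - t := by linarith
      have h2 : 1 - t ≤ 1 - t ^ 2 := by nlinarith [ht.1]
      have hs : Real.sqrt (1 - t) ≤ Real.sqrt (1 - t ^ 2) := Real.sqrt_le_sqrt h2
      have hsp : 0 < Real.sqrt (1 - t) := Real.sqrt_pos.2 h0
      have hle : 1 / Real.sqrt (1 - t ^ 2) ≤ 1 / Real.sqrt (1 - t) :=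
        one_div_le_one_div_of_le hsp hs
      have hr : ‖(1 - t) ^ (-(1/2) : ℝ)‖ = 1 / Real.sqrt (1 - t) := by
        rw [Real.rpow_neg h0.le, Real.norm_eq_abs, abs_of_nonneg (by positivity),
          ← Real.sqrt_eq_rpow, one_div]
      rw [Real.norm_eq_abs, abs_of_nonneg (by positivity), hr]
      exact hle
  have hd : ∀ x ∈ Set.Ioo (0:ℝ) 1, HasDerivAt Real.arcsin (1 / Real.sqrt (1 - x ^ 2)) x :=
    fun x hx => Real.hasDerivAt_arcsin (by linarith [hx.1]) (ne_of_lt hx.2)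
  have := intervalIntegral.integral_eq_sub_of_hasDerivAt_of_tendsto (by norm_num : (0:ℝ) < 1)
    hd hint
    ((Real.continuous_arcsin.tendsto 0).mono_left nhdsWithin_le_nhds)
    ((Real.continuous_arcsin.tendsto 1).mono_left nhdsWithin_le_nhds)
  simpa [Real.arcsin_zero, Real.arcsin_one] using this

private lemma aux_pi {γ : ℝ} (hγ : 0 < γ) :
    ∫ t in (0:ℝ)..1, 1 / Real.sqrt (γ ^ 2 * (1 - t ^ 2)) = π / (2 * γ) := by
  have heq : ∀ t : ℝ, 1 / Real.sqrt (γ ^ 2 * (1 - t ^ 2))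
      = γ⁻¹ * (1 / Real.sqrt (1 - t ^ 2)) := by
    intro t
    rw [Real.sqrt_mul (sq_nonneg γ), Real.sqrt_sq hγ.le, one_div, mul_inv, one_div]
  simp only [heq]
  rw [intervalIntegral.integral_const_mul, aux_arcsin]
  field_simp

/-- The time-map `T(M)` of the positive phase is continuous and strictly
increasing on `(0,∞)`, with `T(0⁺) = 0` and `T(+∞) = π/γ_p`; in particular
`T(M) ∈ (0, π/γ_p)` for every `M > 0`. -/
theorem stmt13 (p γ lp : ℝ) (hp1 : 1 < p) (hp2 : p < 2)
    (hγ : γ = 2 / (2 - p)) (hlp : 0 < lp)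
    (T : ℝ → ℝ)
    (hT : ∀ M : ℝ, 0 < M → T M =
      2 * ∫ t in (0 : ℝ)..1,
        1 / Real.sqrt (γ ^ 2 * (1 - t ^ 2) + (2 * lp / (p * M ^ (2 - p))) * (1 - t ^ p))) :
    ContinuousOn T (Ioi 0) ∧ StrictMonoOn T (Ioi 0) ∧
    Tendsto T (nhdsWithin 0 (Ioi 0)) (nhds 0) ∧
    Tendsto T atTop (nhds (π / γ)) ∧
    ∀ M : ℝ, 0 < M → T M ∈ Ioo 0 (π / γ) := by
  have hp0 : 0 < p := by linarith
  have h2p : 0 < 2 - p := by linarith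
  have hγ0 : 0 < γ := by rw [hγ]; positivity
  set S : ℝ → ℝ := fun M => 2 * ∫ t in (0 : ℝ)..1,
      1 / Real.sqrt (γ ^ 2 * (1 - t ^ 2) + (2 * lp / (p * M ^ (2 - p))) * (1 - t ^ p))
    with hS_def
  have hcpos : ∀ M : ℝ, 0 < M → 0 < 2 * lp / (p * M ^ (2 - p)) := by
    intro M hM
    have := Real.rpow_pos_of_pos hM (2 - p)
    positivity
  have hcanti : ∀ M₁ M₂ : ℝ, 0 < M₁ → M₁ < M₂ →
      2 * lp / (p * M₂ ^ (2 - p)) < 2 * lp / (p * M₁ ^ (2 - p)) := by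
    intro M₁ M₂ h₁ h₂
    have hr : M₁ ^ (2 - p) < M₂ ^ (2 - p) := Real.rpow_lt_rpow h₁.le h₂ h2p
    have hd1 : 0 < p * M₁ ^ (2 - p) := by
      have := Real.rpow_pos_of_pos h₁ (2 - p); positivity
    exact div_lt_div_of_pos_left (by positivity) hd1
      (by nlinarith [Real.rpow_pos_of_pos h₁ (2 - p)])
  have hae1 : ∀ᵐ t : ℝ ∂volume, t ≠ (1:ℝ) := by
    have h1 : (volume : Measure ℝ) {(1:ℝ)} = 0 := measure_singleton 1
    filter_upwards [compl_mem_ae_iff.mpr h1] with t ht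
    simpa using ht
  -- continuity of S on Ioi 0
  have hScont : ∀ M₀ ∈ Ioi (0:ℝ), ContinuousAt S M₀ := by
    intro M₀ hM₀
    refine continuousAt_const.mul ?_
    refine intervalIntegral.continuousAt_of_dominated_interval
      (Filter.Eventually.of_forall (fun M => aux_meas γ p _))
      ?_ (aux_bint γ) ?_
    · filter_upwards [isOpen_Ioi.mem_nhds hM₀] with M hM
      exact ae_of_all _ (fun t ht => aux_bound hγ0 hp0 (hcpos M hM).le t ht)
    · filter_upwards [hae1] with t ht1 hti
      rw [Set.uIoc_of_le (by norm_num : (0:ℝ) ≤ 1)] at hti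
      have htIoo : t ∈ Set.Ioo (0:ℝ) 1 := ⟨hti.1, lt_of_le_of_ne hti.2 ht1⟩
      have hA0 : 0 < γ ^ 2 * (1 - t ^ 2) + (2 * lp / (p * M₀ ^ (2 - p))) * (1 - t ^ p) :=
        aux_Apos hγ0 hp0 (hcpos M₀ hM₀).le htIoo
      have hden : p * M₀ ^ (2 - p) ≠ 0 := by
        have := Real.rpow_pos_of_pos hM₀ (2 - p); positivity
      have hin : ContinuousAt
          (fun M : ℝ => γ ^ 2 * (1 - t ^ 2) + 2 * lp / (p * M ^ (2 - p)) * (1 - t ^ p)) M₀ := by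
        refine continuousAt_const.add (ContinuousAt.mul ?_ continuousAt_const)
        exact continuousAt_const.div
          (continuousAt_const.mul (Real.continuousAt_rpow_const M₀ (2 - p)
            (Or.inl (ne_of_gt hM₀)))) hden
      exact continuousAt_const.div (Real.continuous_sqrt.continuousAt.comp hin)
        (ne_of_gt (Real.sqrt_pos.2 hA0))
  have hTcont : ContinuousOn T (Ioi 0) := by
    refine ContinuousOn.congr (fun M hM => (hScont M hM).continuousWithinAt) ?_
    intro M hM
    exact hT M hM
  -- strict monotonicity
  have hTmono : StrictMonoOn T (Ioi 0) := by
    intro M₁ h₁ M₂ h₂ h12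
    rw [hT M₁ h₁, hT M₂ h₂]
    have := aux_strict hγ0 hp0 (hcpos M₂ h₂).le (hcanti M₁ M₂ h₁ h12)
    linarith
  -- limit at 0⁺
  have hT0 : Tendsto T (nhdsWithin 0 (Ioi 0)) (nhds 0) := by
    have hS0 : Tendsto S (nhdsWithin 0 (Ioi 0)) (nhds 0) := by
      have hI : Tendsto (fun M : ℝ => ∫ t in (0 : ℝ)..1,
          1 / Real.sqrt (γ ^ 2 * (1 - t ^ 2) + (2 * lp / (p * M ^ (2 - p))) * (1 - t ^ p)))
          (nhdsWithin 0 (Ioi 0)) (nhds (∫ t in (0:ℝ)..1, (0:ℝ))) := by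
        refine intervalIntegral.tendsto_integral_filter_of_dominated_convergence
          (fun t => γ⁻¹ * (1 - t) ^ (-(1/2) : ℝ))
          (Filter.Eventually.of_forall (fun M => aux_meas γ p _)) ?_ (aux_bint γ) ?_
        · filter_upwards [self_mem_nhdsWithin] with M hM
          exact ae_of_all _ (fun t ht => aux_bound hγ0 hp0 (hcpos M hM).le t ht)
        · filter_upwards [hae1] with t ht1 hti
          rw [Set.uIoc_of_le (by norm_num : (0:ℝ) ≤ 1)] at hti
          have htIoo : t ∈ Set.Ioo (0:ℝ) 1 := ⟨hti.1, lt_of_le_of_ne hti.2 ht1⟩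
          have htp : 0 < 1 - t ^ p := by
            have := Real.rpow_lt_one htIoo.1.le htIoo.2 hp0; linarith
          have h1 : Tendsto (fun M : ℝ => p * M ^ (2 - p))
              (nhdsWithin 0 (Ioi 0)) (nhdsWithin 0 (Ioi 0)) := by
            refine tendsto_nhdsWithin_iff.mpr ⟨?_, ?_⟩
            · have hr : Tendsto (fun M : ℝ => M ^ (2 - p)) (nhds 0) (nhds (0:ℝ)) := by
                have hc := Real.continuousAt_rpow_const 0 (2 - p) (Or.inr h2p.le)
                have h00 : (0:ℝ) ^ (2 - p) = 0 := Real.zero_rpow (ne_of_gt h2p)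
                simpa [ContinuousAt, h00] using hc
              have := hr.const_mul p
              simpa using this.mono_left nhdsWithin_le_nhds
            · filter_upwards [self_mem_nhdsWithin] with M hM
              have := Real.rpow_pos_of_pos hM (2 - p)
              exact mul_pos hp0 this
          have hc_top : Tendsto (fun M : ℝ => 2 * lp / (p * M ^ (2 - p)))
              (nhdsWithin 0 (Ioi 0)) atTop := by
            have := (tendsto_inv_nhdsGT_zero.comp h1).const_mul_atTop
              (by positivity : (0:ℝ) < 2 * lp)
            simpa [div_eq_mul_inv, Function.comp] using this
          have hA : Tendsto (fun M : ℝ =>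
              γ ^ 2 * (1 - t ^ 2) + (2 * lp / (p * M ^ (2 - p))) * (1 - t ^ p))
              (nhdsWithin 0 (Ioi 0)) atTop :=
            tendsto_atTop_add_const_left _ _ (hc_top.atTop_mul_const htp)
          have hsqrt : Tendsto Real.sqrt atTop atTop :=
            (tendsto_rpow_atTop (by norm_num : (0:ℝ) < 1/2)).congr
              (fun x => (Real.sqrt_eq_rpow x).symm)
          have := tendsto_inv_atTop_zero.comp (hsqrt.comp hA)
          simpa [Function.comp_def, one_div] using this
      have : Tendsto S (nhdsWithin 0 (Ioi 0)) (nhds (2 * ∫ t in (0:ℝ)..1, (0:ℝ))) :=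
        hI.const_mul 2
      simpa using this
    refine hS0.congr' ?_
    filter_upwards [self_mem_nhdsWithin] with M hM
    exact (hT M hM).symm
  -- limit at +∞
  have hTtop : Tendsto T atTop (nhds (π / γ)) := by
    have hc0 : Tendsto (fun M : ℝ => 2 * lp / (p * M ^ (2 - p))) atTop (nhds 0) := by
      have hdenom : Tendsto (fun M : ℝ => p * M ^ (2 - p)) atTop atTop :=
        (tendsto_rpow_atTop h2p).const_mul_atTop hp0
      exact tendsto_const_nhds.div_atTop hdenom
    have hI : Tendsto (fun M : ℝ => ∫ t in (0 : ℝ)..1,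
        1 / Real.sqrt (γ ^ 2 * (1 - t ^ 2) + (2 * lp / (p * M ^ (2 - p))) * (1 - t ^ p)))
        atTop (nhds (∫ t in (0:ℝ)..1, 1 / Real.sqrt (γ ^ 2 * (1 - t ^ 2)))) := by
      refine intervalIntegral.tendsto_integral_filter_of_dominated_convergence
        (fun t => γ⁻¹ * (1 - t) ^ (-(1/2) : ℝ))
        (Filter.Eventually.of_forall (fun M => aux_meas γ p _)) ?_ (aux_bint γ) ?_
      · filter_upwards [eventually_gt_atTop (0:ℝ)] with M hM
        exact ae_of_all _ (fun t ht => aux_bound hγ0 hp0 (hcpos M hM).le t ht)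
      · filter_upwards [hae1] with t ht1 hti
        rw [Set.uIoc_of_le (by norm_num : (0:ℝ) ≤ 1)] at hti
        have htIoo : t ∈ Set.Ioo (0:ℝ) 1 := ⟨hti.1, lt_of_le_of_ne hti.2 ht1⟩
        have ht2 : t ^ 2 < 1 := by nlinarith [htIoo.1, htIoo.2]
        have hA0 : 0 < γ ^ 2 * (1 - t ^ 2) := mul_pos (pow_pos hγ0 2) (by linarith)
        have hAc : ContinuousAt
            (fun x : ℝ => 1 / Real.sqrt (γ ^ 2 * (1 - t ^ 2) + x * (1 - t ^ p))) 0 := by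
          have h0 : 0 < γ ^ 2 * (1 - t ^ 2) + (0:ℝ) * (1 - t ^ p) := by simpa using hA0
          refine continuousAt_const.div
            (Real.continuous_sqrt.continuousAt.comp
              (continuousAt_const.add (continuousAt_id.mul continuousAt_const)))
            (ne_of_gt (Real.sqrt_pos.2 h0))
        have := hAc.tendsto.comp hc0
        simpa [Function.comp_def] using this
    have h2γ : 2 * (π / (2 * γ)) = π / γ := by
      field_simp
    have := hI.const_mul 2
    rw [aux_pi hγ0, h2γ] at this
    refine this.congr' ?_
    filter_upwards [eventually_gt_atTop (0:ℝ)] with M hM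
    exact (hT M hM).symm
  refine ⟨hTcont, hTmono, hT0, hTtop, ?_⟩
  intro M hM
  constructor
  · rw [hT M hM]
    have := aux_ipos (γ := γ) (p := p) hγ0 hp0 (hcpos M hM).le
    linarith
  · rw [hT M hM]
    have hs := aux_strict hγ0 hp0 (le_refl (0:ℝ)) (hcpos M hM)
    have h0int : (∫ t in (0:ℝ)..1,
        1 / Real.sqrt (γ ^ 2 * (1 - t ^ 2) + (0:ℝ) * (1 - t ^ p))) = π / (2 * γ) := by
      simp only [zero_mul, add_zero]
      exact aux_pi hγ0
    rw [h0int] at hs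
    have h2γ : 2 * (π / (2 * γ)) = π / γ := by field_simp
    linarith
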